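/- Let Q_1 be a quotient module of H²(𝔻) and let Q = Q_1 ⊗ H²(𝔻^{n-1}) ⊆ H²(𝔻ⁿ). A closed subspace M of Q is reducing for the compression P_Q M_{z_1}|_Q if and only if M = Q_1 ⊗ E for some closed subspace E of H²(𝔻^{n-1}). -/

import Mathlib

open ContinuousLinearMap

open scoped InnerProductSpace

open scoped InnerProductSpace ENNReal
open ContinuousLinearMap

noncomputable section
namespace Red12

set_option linter.unusedSectionVars false

variable {ι κ : Type*} [DecidableEq ι] [DecidableEq κ]

abbrev LP (T : Type*) := lp (fun _ : T => ℂ) 2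

lemma coord_eq_inner (x : LP ι) (i : ι) : ⟪lp.single 2 i (1:ℂ), x⟫_ℂ = x i := by
  rw [lp.inner_single_left]; simp [RCLike.inner_apply]

lemma lp_ext {x y : LP ι} (h : ∀ i, x i = y i) : x = y := lp.ext (funext h)

lemma single_coord (i : ι) (c : ℂ) (j : ι) :
    (lp.single 2 i c : LP ι) j = if j = i then c else 0 := by
  rcases eq_or_ne j i with rfl | h
  · simp [lp.single_apply_self]
  · simp [lp.single_apply_ne _ _ _ h, h]

lemma summable_sq (q : LP ι) : Summable fun i => ‖q i‖ ^ ((2:ℝ≥0∞).toReal) :=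
  (lp.memℓp q).summable (by norm_num)

lemma tpMem (q : LP ι) (e : LP κ) : Memℓp (fun p : ι × κ => q p.1 * e p.2) 2 := by
  apply memℓp_gen
  have h := ((summable_sq q).mul_of_nonneg (summable_sq e)
    (fun i => Real.rpow_nonneg (norm_nonneg _) _)
    (fun k => Real.rpow_nonneg (norm_nonneg _) _))
  apply h.congr
  intro p
  rw [← Real.mul_rpow (norm_nonneg _) (norm_nonneg _), norm_mul]

/-- elementary tensor -/
def tp (q : LP ι) (e : LP κ) : LP (ι × κ) := ⟨fun p => q p.1 * e p.2, tpMem q e⟩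

@[simp] lemma tp_apply (q : LP ι) (e : LP κ) (p : ι × κ) : tp q e p = q p.1 * e p.2 := rfl

lemma tp_add_left (q q' : LP ι) (e : LP κ) : tp (q + q') e = tp q e + tp q' e := by
  apply lp_ext; intro p; simp [tp_apply, add_mul]

lemma tp_add_right (q : LP ι) (e e' : LP κ) : tp q (e + e') = tp q e + tp q e' := by
  apply lp_ext; intro p; simp [tp_apply, mul_add]

lemma tp_smul_left (c : ℂ) (q : LP ι) (e : LP κ) : tp (c • q) e = c • tp q e := by
  apply lp_ext; intro p; simp [tp_apply, mul_assoc]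

lemma tp_smul_right (c : ℂ) (q : LP ι) (e : LP κ) : tp q (c • e) = c • tp q e := by
  apply lp_ext; intro p; simp [tp_apply]; ring

lemma summable_mul_conj (q q' : LP ι) :
    Summable fun i => ‖(starRingEnd ℂ) (q i) * q' i‖ := by
  have h2 : (0:ℝ) < (2:ℝ≥0∞).toReal := by norm_num
  refine Summable.of_nonneg_of_le (fun i => norm_nonneg _) (fun i => ?_)
    (((summable_sq q).add (summable_sq q')).mul_left (1/2 : ℝ))
  have hq : ‖q i‖ ^ ((2:ℝ≥0∞).toReal) = ‖q i‖^(2:ℕ) := by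
    rw [show ((2:ℝ≥0∞).toReal) = ((2:ℕ):ℝ) by norm_num, Real.rpow_natCast]
  have hq' : ‖q' i‖ ^ ((2:ℝ≥0∞).toReal) = ‖q' i‖^(2:ℕ) := by
    rw [show ((2:ℝ≥0∞).toReal) = ((2:ℕ):ℝ) by norm_num, Real.rpow_natCast]
  rw [norm_mul, hq, hq', RCLike.norm_conj]
  nlinarith [norm_nonneg (q i), norm_nonneg (q' i), sq_nonneg (‖q i‖ - ‖q' i‖)]

lemma inner_tp_tp (q q' : LP ι) (e e' : LP κ) :
    ⟪tp q e, tp q' e'⟫_ℂ = ⟪q, q'⟫_ℂ * ⟪e, e'⟫_ℂ := by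
  rw [lp.inner_eq_tsum, lp.inner_eq_tsum, lp.inner_eq_tsum]
  simp only [RCLike.inner_apply', tp_apply, map_mul]
  rw [tsum_mul_tsum_of_summable_norm (summable_mul_conj q q') (summable_mul_conj e e')]
  apply tsum_congr
  intro p
  ring

lemma norm_tp (q : LP ι) (e : LP κ) : ‖tp q e‖ = ‖q‖ * ‖e‖ := by
  have h := inner_tp_tp q q e e
  rw [inner_self_eq_norm_sq_to_K, inner_self_eq_norm_sq_to_K, inner_self_eq_norm_sq_to_K] at h
  have h' : (‖tp q e‖^2 : ℝ) = ‖q‖^2 * ‖e‖^2 := by exact_mod_cast h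
  nlinarith [norm_nonneg (tp q e), norm_nonneg q, norm_nonneg e, mul_nonneg (norm_nonneg q) (norm_nonneg e)]

/-- row embedding: `e ↦ tp (single i 1) e` -/
def Jrow (i : ι) : LP κ →L[ℂ] LP (ι × κ) :=
  LinearMap.mkContinuous
    { toFun := fun e => tp (lp.single 2 i (1:ℂ)) e
      map_add' := fun e e' => tp_add_right _ e e'
      map_smul' := fun c e => tp_smul_right c _ e } 1
    (fun e => by simp [norm_tp, lp.norm_single (E := fun _ : ι => ℂ) (by norm_num : (0:ℝ≥0∞) < 2) i (1:ℂ)])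

@[simp] lemma Jrow_apply (i : ι) (e : LP κ) : Jrow i e = tp (lp.single 2 i (1:ℂ)) e := rfl

/-- column embedding: `q ↦ tp q (single k 1)` -/
def Jcol (k : κ) : LP ι →L[ℂ] LP (ι × κ) :=
  LinearMap.mkContinuous
    { toFun := fun q => tp q (lp.single 2 k (1:ℂ))
      map_add' := fun q q' => tp_add_left q q' _
      map_smul' := fun c q => tp_smul_left c q _ } 1
    (fun q => by simp [norm_tp, lp.norm_single (E := fun _ : κ => ℂ) (by norm_num : (0:ℝ≥0∞) < 2) k (1:ℂ)])

@[simp] lemma Jcol_apply (k : κ) (q : LP ι) : Jcol k q = tp q (lp.single 2 k (1:ℂ)) := rfl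

/-- slice in the first variable: fixes `k`, gives function of `i` -/
def slice (k : κ) : LP (ι × κ) →L[ℂ] LP ι := adjoint (Jcol (ι := ι) k)

/-- row in the second variable: fixes `i` -/
def row (i : ι) : LP (ι × κ) →L[ℂ] LP κ := adjoint (Jrow (κ := κ) i)

lemma inner_Jcol (k : κ) (q : LP ι) (f : LP (ι × κ)) :
    ⟪Jcol k q, f⟫_ℂ = ⟪q, slice k f⟫_ℂ := (adjoint_inner_right _ _ _).symm

lemma inner_Jrow (i : ι) (e : LP κ) (f : LP (ι × κ)) :
    ⟪Jrow i e, f⟫_ℂ = ⟪e, row i f⟫_ℂ := (adjoint_inner_right _ _ _).symm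

@[simp] lemma slice_apply (k : κ) (f : LP (ι × κ)) (i : ι) : slice k f i = f (i, k) := by
  rw [← coord_eq_inner, ← inner_Jcol, ← coord_eq_inner]
  congr 1
  apply lp_ext; intro p
  rcases p with ⟨a, g⟩
  simp only [Jcol_apply, tp_apply, single_coord, Prod.mk.injEq]
  rcases eq_or_ne a i with rfl | ha
  · rcases eq_or_ne g k with rfl | hg
    · simp
    · simp [hg]
  · simp [ha]

@[simp] lemma row_apply (i : ι) (f : LP (ι × κ)) (k : κ) : row i f k = f (i, k) := by
  rw [← coord_eq_inner, ← inner_Jrow, ← coord_eq_inner]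
  congr 1
  apply lp_ext; intro p
  rcases p with ⟨a, g⟩
  simp only [Jrow_apply, tp_apply, single_coord, Prod.mk.injEq]
  rcases eq_or_ne a i with rfl | ha
  · rcases eq_or_ne g k with rfl | hg
    · simp
    · simp [hg]
  · simp [ha]

lemma tp_single_single (i : ι) (k : κ) (c d : ℂ) :
    tp (lp.single 2 i c) (lp.single 2 k d) = lp.single 2 (i,k) (c*d) := by
  apply lp_ext; intro p; rcases p with ⟨a, g⟩
  simp only [tp_apply, single_coord, Prod.mk.injEq]
  rcases eq_or_ne a i with rfl | ha
  · rcases eq_or_ne g k with rfl | hg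
    · simp
    · simp [hg]
  · simp [ha]

lemma single_eq_smul (i : ι) (c : ℂ) : (lp.single 2 i c : LP ι) = c • lp.single 2 i (1:ℂ) := by
  rw [← lp.single_smul]; congr 1; simp

/-- row decomposition -/
lemma rowSum (f : LP (ι × κ)) : HasSum (fun i => (Jrow i (row i f) : LP (ι × κ))) f := by
  have h1 : HasSum (fun p : ι × κ => lp.single 2 p (f p)) f := lp.hasSum_single (by norm_num) f
  refine HasSum.prod_fiberwise h1 (fun i => ?_)
  have h2 : HasSum (fun g => lp.single 2 g ((row i f) g)) (row i f) :=
    lp.hasSum_single (by norm_num) (row i f)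
  have h3 := (Jrow (ι := ι) i).hasSum h2
  refine h3.congr_fun (fun g => ?_)
  rw [Jrow_apply, tp_single_single, row_apply, one_mul]

/-- key weak-orthogonality lemma -/
lemma inner_tp_eq_zero (q : LP ι) (y : LP κ) (h : LP (ι × κ))
    (hy : ∀ i, ⟪y, row i h⟫_ℂ = 0) : ⟪tp q y, h⟫_ℂ = 0 := by
  have h1 := rowSum h
  have h2 : HasSum (fun i => ⟪tp q y, (Jrow i (row i h) : LP (ι × κ))⟫_ℂ) ⟪tp q y, h⟫_ℂ :=
    (innerSL ℂ (tp q y)).hasSum h1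
  have h3 : ∀ i, ⟪tp q y, (Jrow i (row i h) : LP (ι × κ))⟫_ℂ = 0 := by
    intro i
    rw [Jrow_apply, inner_tp_tp, hy i, mul_zero]
  exact (h2.congr_fun fun i => (h3 i).symm).unique hasSum_zero

/-- continuous linear maps out of `LP ι` agreeing on singles agree -/
lemma clm_ext_lp {W : Type*} [NormedAddCommGroup W] [NormedSpace ℂ W]
    (F G : LP ι →L[ℂ] W) (h : ∀ i, F (lp.single 2 i (1:ℂ)) = G (lp.single 2 i (1:ℂ))) :
    F = G := by
  ext x
  have h1 : HasSum (fun i => lp.single 2 i (x i)) x := lp.hasSum_single (by norm_num) x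
  have hF := F.hasSum h1
  have hG := G.hasSum h1
  refine hF.unique (hG.congr_fun fun i => ?_)
  rw [single_eq_smul, map_smul, map_smul, h i]

/-- tensoring on the left by a fixed `q`, as a CLM in the second variable -/
def tpR (q : LP ι) : LP κ →L[ℂ] LP (ι × κ) :=
  LinearMap.mkContinuous
    { toFun := fun e => tp q e
      map_add' := fun e e' => tp_add_right q e e'
      map_smul' := fun c e => tp_smul_right c q e } ‖q‖
    (fun e => by simpa using (norm_tp q e).le)

@[simp] lemma tpR_apply (q : LP ι) (e : LP κ) : tpR q e = tp q e := rfl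

lemma slice_tp (k : κ) (q : LP ι) (e : LP κ) : slice k (tp q e) = e k • q := by
  apply lp_ext; intro i
  rw [slice_apply, lp.coeFn_smul]
  simp [mul_comm]

lemma row_tp (i : ι) (q : LP ι) (e : LP κ) : row i (tp q e) = q i • e := by
  apply lp_ext; intro k
  rw [row_apply, lp.coeFn_smul]
  simp [mul_comm]

end Red12

open Red12

set_option maxHeartbeats 2000000 in
/-- Realize `H²(𝔻ⁿ) ≅ H²(𝔻) ⊗ H²(𝔻^m)` (`m = n - 1 ≥ 1`) as
`ℓ²(ℕ × ℕ^m)`, with `s` the shift on `H²(𝔻) ≅ ℓ²(ℕ)` and `S₁ = M_{z_1}` the shift in the first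
variable.  Let `Q₁` be a quotient module of `H²(𝔻)` (closed, `s*`-invariant) and
`Q = Q₁ ⊗ H²(𝔻^m)` (the subspace of `f` whose first-variable slices all lie in `Q₁`), with
orthogonal projection `PQ`.  A closed subspace `M ⊆ Q` with orthogonal projection `PM` is
reducing for the compression `P_Q M_{z_1}|_Q` (encoded by `PM` commuting with
`A = PQ S₁ PQ`) if and only if `M = Q₁ ⊗ E` for some closed subspace `E ⊆ H²(𝔻^m)`,
i.e. `M` consists of those `f` whose first-variable slices lie in `Q₁` and whose remaining-variable
slices lie in `E`. -/
theorem reducing_for_compression_iff_tensor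
    {m : ℕ} (hm : 1 ≤ m)
    (s : lp (fun _ : ℕ => ℂ) 2 →L[ℂ] lp (fun _ : ℕ => ℂ) 2)
    (hs : ∀ a : ℕ, s (lp.single 2 a (1 : ℂ)) = lp.single 2 (a + 1) (1 : ℂ))
    (S₁ : lp (fun _ : ℕ × (Fin m → ℕ) => ℂ) 2 →L[ℂ] lp (fun _ : ℕ × (Fin m → ℕ) => ℂ) 2)
    (hS₁ : ∀ (a : ℕ) (g : Fin m → ℕ),
      S₁ (lp.single 2 (a, g) (1 : ℂ)) = lp.single 2 (a + 1, g) (1 : ℂ))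
    (Q₁ : Submodule ℂ (lp (fun _ : ℕ => ℂ) 2))
    (hQ₁closed : IsClosed (Q₁ : Set (lp (fun _ : ℕ => ℂ) 2)))
    (hQ₁inv : ∀ x ∈ Q₁, ContinuousLinearMap.adjoint s x ∈ Q₁)
    (Q : Submodule ℂ (lp (fun _ : ℕ × (Fin m → ℕ) => ℂ) 2))
    (hQ : (Q : Set (lp (fun _ : ℕ × (Fin m → ℕ) => ℂ) 2)) =
      {f : lp (fun _ : ℕ × (Fin m → ℕ) => ℂ) 2 | ∀ g : Fin m → ℕ, ∃ q ∈ Q₁,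
        ∀ a : ℕ, (q : ∀ _ : ℕ, ℂ) a = (f : ∀ _ : ℕ × (Fin m → ℕ), ℂ) (a, g)})
    (PQ : lp (fun _ : ℕ × (Fin m → ℕ) => ℂ) 2 →L[ℂ] lp (fun _ : ℕ × (Fin m → ℕ) => ℂ) 2)
    (hPQsa : IsSelfAdjoint PQ) (hPQidem : PQ ∘L PQ = PQ)
    (hPQrange : Set.range PQ = (Q : Set (lp (fun _ : ℕ × (Fin m → ℕ) => ℂ) 2)))
    (M : Submodule ℂ (lp (fun _ : ℕ × (Fin m → ℕ) => ℂ) 2))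
    (hMclosed : IsClosed (M : Set (lp (fun _ : ℕ × (Fin m → ℕ) => ℂ) 2)))
    (hMQ : M ≤ Q)
    (PM : lp (fun _ : ℕ × (Fin m → ℕ) => ℂ) 2 →L[ℂ] lp (fun _ : ℕ × (Fin m → ℕ) => ℂ) 2)
    (hPMsa : IsSelfAdjoint PM) (hPMidem : PM ∘L PM = PM)
    (hPMrange : Set.range PM = (M : Set (lp (fun _ : ℕ × (Fin m → ℕ) => ℂ) 2))) :
    (PM ∘L (PQ ∘L S₁ ∘L PQ) = (PQ ∘L S₁ ∘L PQ) ∘L PM) ↔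
      ∃ E : Submodule ℂ (lp (fun _ : Fin m → ℕ => ℂ) 2),
        IsClosed (E : Set (lp (fun _ : Fin m → ℕ => ℂ) 2)) ∧
        (M : Set (lp (fun _ : ℕ × (Fin m → ℕ) => ℂ) 2)) =
          {f : lp (fun _ : ℕ × (Fin m → ℕ) => ℂ) 2 |
            (∀ g : Fin m → ℕ, ∃ q ∈ Q₁,
              ∀ a : ℕ, (q : ∀ _ : ℕ, ℂ) a = (f : ∀ _ : ℕ × (Fin m → ℕ), ℂ) (a, g)) ∧
            (∀ a : ℕ, ∃ e ∈ E,
              ∀ g : Fin m → ℕ,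
                (e : ∀ _ : Fin m → ℕ, ℂ) g = (f : ∀ _ : ℕ × (Fin m → ℕ), ℂ) (a, g))} := by
  classical
  haveI : CompleteSpace (↥Q₁) := hQ₁closed.completeSpace_coe
  set A := PQ ∘L S₁ ∘L PQ with hA_def
  set A' := PQ ∘L (ContinuousLinearMap.adjoint S₁) ∘L PQ with hA'_def
  set Pr : lp (fun _ : ℕ => ℂ) 2 →L[ℂ] lp (fun _ : ℕ => ℂ) 2 :=
    Q₁.subtypeL ∘L (Q₁.orthogonalProjectionOnto) with hPr_def
  have hPrmem : ∀ x, Pr x ∈ Q₁ := fun x => (Q₁.orthogonalProjectionOnto x).2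
  have hPrortho : ∀ x, ∀ u ∈ Q₁, ⟪x - Pr x, u⟫_ℂ = 0 := fun x u hu =>
    Submodule.starProjection_inner_eq_zero (K := Q₁) x u hu
  have hPrunique : ∀ x v, v ∈ Q₁ → (∀ u ∈ Q₁, ⟪x - v, u⟫_ℂ = 0) → Pr x = v := fun x v hv h =>
    Submodule.eq_starProjection_of_mem_of_inner_eq_zero (K := Q₁) hv h
  have hPrfix : ∀ q ∈ Q₁, Pr q = q := fun q hq => hPrunique q q hq (by simp)
  have hPrzero : ∀ x, (∀ u ∈ Q₁, ⟪x, u⟫_ℂ = 0) → Pr x = 0 := fun x h =>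
    hPrunique x 0 (zero_mem _) (by simpa using h)
  have hPrinner : ∀ x y, ⟪Pr x, y⟫_ℂ = ⟪x, Pr y⟫_ℂ := by
    intro x y
    have h1 : ⟪Pr x, y - Pr y⟫_ℂ = 0 := by
      rw [inner_eq_zero_symm]; exact hPrortho y (Pr x) (hPrmem x)
    have h2 : ⟪x - Pr x, Pr y⟫_ℂ = 0 := hPrortho x (Pr y) (hPrmem y)
    rw [inner_sub_right] at h1
    rw [inner_sub_left] at h2
    linear_combination h1 - h2
  have hPQadj : ContinuousLinearMap.adjoint PQ = PQ := by
    rw [← ContinuousLinearMap.star_eq_adjoint]; exact hPQsa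
  have hPMadj : ContinuousLinearMap.adjoint PM = PM := by
    rw [← ContinuousLinearMap.star_eq_adjoint]; exact hPMsa
  have hPQinner : ∀ x y, ⟪PQ x, y⟫_ℂ = ⟪x, PQ y⟫_ℂ := by
    intro x y; conv_lhs => rw [← hPQadj]
    exact ContinuousLinearMap.adjoint_inner_left PQ y x
  have hPMinner : ∀ x y, ⟪PM x, y⟫_ℂ = ⟪x, PM y⟫_ℂ := by
    intro x y; conv_lhs => rw [← hPMadj]
    exact ContinuousLinearMap.adjoint_inner_left PM y x
  have hQmem : ∀ x, PQ x ∈ Q := by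
    intro x
    have h : PQ x ∈ Set.range PQ := ⟨x, rfl⟩
    rw [hPQrange] at h; exact h
  have hQfix : ∀ f ∈ Q, PQ f = f := by
    intro f hf
    have h : f ∈ Set.range PQ := by rw [hPQrange]; exact hf
    obtain ⟨y, hy⟩ := h
    have h2 := ContinuousLinearMap.ext_iff.mp hPQidem y
    rw [ContinuousLinearMap.comp_apply, hy] at h2
    exact h2
  have hMmem : ∀ x, PM x ∈ M := by
    intro x
    have h : PM x ∈ Set.range PM := ⟨x, rfl⟩
    rw [hPMrange] at h; exact h
  have hMfix : ∀ f ∈ M, PM f = f := by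
    intro f hf
    have h : f ∈ Set.range PM := by rw [hPMrange]; exact hf
    obtain ⟨y, hy⟩ := h
    have h2 := ContinuousLinearMap.ext_iff.mp hPMidem y
    rw [ContinuousLinearMap.comp_apply, hy] at h2
    exact h2
  have hMofPM : ∀ z, PM z = z → z ∈ M := fun z h => h ▸ hMmem z
  have hQs : ∀ f, f ∈ Q ↔ ∀ g, slice g f ∈ Q₁ := by
    intro f
    constructor
    · intro hf g
      have hf' : f ∈ {f : lp (fun _ : ℕ × (Fin m → ℕ) => ℂ) 2 | ∀ g : Fin m → ℕ, ∃ q ∈ Q₁,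
          ∀ a : ℕ, (q : ∀ _ : ℕ, ℂ) a = (f : ∀ _ : ℕ × (Fin m → ℕ), ℂ) (a, g)} := by
        rw [← hQ]; exact hf
      obtain ⟨q, hq, hcoord⟩ := hf' g
      have he : slice g f = q := lp_ext fun a => by rw [slice_apply]; exact (hcoord a).symm
      rwa [he]
    · intro h
      have h2 : f ∈ {f : lp (fun _ : ℕ × (Fin m → ℕ) => ℂ) 2 | ∀ g : Fin m → ℕ, ∃ q ∈ Q₁,
          ∀ a : ℕ, (q : ∀ _ : ℕ, ℂ) a = (f : ∀ _ : ℕ × (Fin m → ℕ), ℂ) (a, g)} :=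
        fun g => ⟨slice g f, h g, fun a => by rw [slice_apply]⟩
      rw [← SetLike.mem_coe, hQ]; exact h2
  -- coordinates of s, s*, S₁, S₁*
  have hsS : ∀ (x : lp (fun _ : ℕ => ℂ) 2) (b : ℕ),
      (ContinuousLinearMap.adjoint s x) b = x (b+1) := by
    intro x b
    rw [← coord_eq_inner, ContinuousLinearMap.adjoint_inner_right, hs b, coord_eq_inner]
  have hsStar0 : ContinuousLinearMap.adjoint s (lp.single 2 0 (1:ℂ)) = 0 := by
    apply lp_ext; intro b
    rw [hsS, single_coord, lp.coeFn_zero]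
    simp
  have hsStarS : ∀ b : ℕ, ContinuousLinearMap.adjoint s (lp.single 2 (b+1) (1:ℂ)) =
      lp.single 2 b (1:ℂ) := by
    intro b; apply lp_ext; intro d
    rw [hsS, single_coord, single_coord]
    by_cases h : d = b <;> simp [h]
  have hs0 : ∀ x, s x 0 = 0 := by
    intro x
    rw [← coord_eq_inner, ← ContinuousLinearMap.adjoint_inner_left, hsStar0, inner_zero_left]
  have hsSucc : ∀ x b, s x (b+1) = x b := by
    intro x b
    rw [← coord_eq_inner, ← ContinuousLinearMap.adjoint_inner_left, hsStarS, coord_eq_inner]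
  have hS₁S : ∀ (f : lp (fun _ : ℕ × (Fin m → ℕ) => ℂ) 2) (a : ℕ) (g : Fin m → ℕ),
      (ContinuousLinearMap.adjoint S₁ f) (a, g) = f (a+1, g) := by
    intro f a g
    rw [← coord_eq_inner, ContinuousLinearMap.adjoint_inner_right, hS₁ a g, coord_eq_inner]
  have hS₁Star0 : ∀ g : Fin m → ℕ,
      ContinuousLinearMap.adjoint S₁ (lp.single 2 ((0:ℕ), g) (1:ℂ)) = 0 := by
    intro g; apply lp_ext; rintro ⟨b, h⟩
    rw [hS₁S, single_coord, lp.coeFn_zero]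
    simp [Prod.ext_iff]
  have hS₁StarS : ∀ (a : ℕ) (g : Fin m → ℕ),
      ContinuousLinearMap.adjoint S₁ (lp.single 2 (a+1, g) (1:ℂ)) = lp.single 2 (a, g) (1:ℂ) := by
    intro a g; apply lp_ext; rintro ⟨b, h⟩
    rw [hS₁S, single_coord, single_coord]
    by_cases hb : b = a <;> by_cases hh : h = g <;> simp [Prod.ext_iff, hb, hh]
  have hS₁0 : ∀ f (g : Fin m → ℕ), S₁ f (0, g) = 0 := by
    intro f g
    rw [← coord_eq_inner, ← ContinuousLinearMap.adjoint_inner_left, hS₁Star0, inner_zero_left]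
  have hS₁Succ : ∀ f (a : ℕ) (g : Fin m → ℕ), S₁ f (a+1, g) = f (a, g) := by
    intro f a g
    rw [← coord_eq_inner, ← ContinuousLinearMap.adjoint_inner_left, hS₁StarS, coord_eq_inner]
  -- slices and rows of S₁, S₁*
  have hsliceS₁ : ∀ f g, slice g (S₁ f) = s (slice g f) := by
    intro f g; apply lp_ext; intro a
    match a with
    | 0 => rw [slice_apply, hS₁0, hs0]
    | (a+1) => rw [slice_apply, hS₁Succ, hsSucc, slice_apply]
  have hsliceS₁star : ∀ f g, slice g (ContinuousLinearMap.adjoint S₁ f) =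
      ContinuousLinearMap.adjoint s (slice g f) := by
    intro f g; apply lp_ext; intro a
    rw [slice_apply, hS₁S, hsS, slice_apply]
  have hrowS₁0 : ∀ f, row 0 (S₁ f) = (0 : lp (fun _ : Fin m → ℕ => ℂ) 2) := by
    intro f; apply lp_ext; intro g
    rw [row_apply, hS₁0, lp.coeFn_zero]; rfl
  have hrowS₁S : ∀ f a, row (a+1) (S₁ f) = row a f := by
    intro f a; apply lp_ext; intro g
    rw [row_apply, hS₁Succ, row_apply]
  have hrowS₁star : ∀ f a, row a (ContinuousLinearMap.adjoint S₁ f) = row (a+1) f := by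
    intro f a; apply lp_ext; intro g
    rw [row_apply, hS₁S, row_apply]
  -- PQ acts slice-wise by Pr
  have hJcolQ : ∀ (g : Fin m → ℕ), ∀ q ∈ Q₁, Jcol g q ∈ Q := by
    intro g q hq
    rw [hQs]
    intro h
    rw [Jcol_apply, slice_tp]
    exact Q₁.smul_mem _ hq
  have hPQslice : ∀ f g, slice g (PQ f) = Pr (slice g f) := by
    intro f g
    symm
    apply hPrunique _ _ ((hQs _).mp (hQmem f) g)
    intro u hu
    rw [← map_sub, inner_eq_zero_symm, ← inner_Jcol, inner_sub_right, ← hPQinner,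
      hQfix _ (hJcolQ g u hu), sub_self]
  have hPQtp : ∀ (x : lp (fun _ : ℕ => ℂ) 2) (e : lp (fun _ : Fin m → ℕ => ℂ) 2),
      PQ (tp x e) = tp (Pr x) e := by
    intro x e
    apply lp_ext; rintro ⟨a, g⟩
    have h1 : (PQ (tp x e)) (a, g) = slice g (PQ (tp x e)) a := (slice_apply g _ a).symm
    rw [h1, hPQslice, slice_tp, map_smul, lp.coeFn_smul, Pi.smul_apply, tp_apply, smul_eq_mul]
    ring
  -- A and A'
  have hAdjA : ContinuousLinearMap.adjoint A = A' := by
    rw [hA_def, hA'_def, ContinuousLinearMap.adjoint_comp, ContinuousLinearMap.adjoint_comp,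
      hPQadj]
    ext x
    simp [ContinuousLinearMap.comp_apply]
  have hAapp : ∀ f ∈ Q, A f = PQ (S₁ f) := by
    intro f hf
    rw [hA_def]
    simp only [ContinuousLinearMap.comp_apply]
    rw [hQfix f hf]
  have hA'app : ∀ f ∈ Q, A' f = PQ (ContinuousLinearMap.adjoint S₁ f) := by
    intro f hf
    rw [hA'_def]
    simp only [ContinuousLinearMap.comp_apply]
    rw [hQfix f hf]
  have hAmemQ : ∀ x, A x ∈ Q := by
    intro x; rw [hA_def]; simp only [ContinuousLinearMap.comp_apply]; exact hQmem _
  have hA'memQ : ∀ x, A' x ∈ Q := by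
    intro x; rw [hA'_def]; simp only [ContinuousLinearMap.comp_apply]; exact hQmem _
  have hAslice : ∀ f, f ∈ Q → ∀ g, slice g (A f) = Pr (s (slice g f)) := by
    intro f hf g
    rw [hAapp f hf, hPQslice, hsliceS₁]
  have hA'slice : ∀ f, f ∈ Q → ∀ g, slice g (A' f) =
      Pr (ContinuousLinearMap.adjoint s (slice g f)) := by
    intro f hf g
    rw [hA'app f hf, hPQslice, hsliceS₁star]
  -- w and the defect identity
  set w : lp (fun _ : ℕ => ℂ) 2 := Pr (lp.single 2 0 (1:ℂ)) with hw_def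
  have hwmem : w ∈ Q₁ := hPrmem _
  have hInnw : ∀ q ∈ Q₁, ⟪w, q⟫_ℂ = q 0 := by
    intro q hq
    have h1 := hPrortho (lp.single 2 0 (1:ℂ)) q hq
    rw [inner_sub_left] at h1
    have h2 : ⟪lp.single 2 0 (1:ℂ), q⟫_ℂ = q 0 := coord_eq_inner q 0
    rw [← hw_def] at h1
    linear_combination h2 - h1
  have hPrSucc : ∀ n : ℕ, Pr (s (Pr (lp.single 2 n (1:ℂ)))) = Pr (lp.single 2 (n+1) (1:ℂ)) := by
    intro n
    have h1 : Pr (s (Pr (lp.single 2 n (1:ℂ))) - s (lp.single 2 n (1:ℂ))) = 0 := by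
      apply hPrzero
      intro u hu
      rw [← map_sub, ← ContinuousLinearMap.adjoint_inner_right]
      have h2 := hPrortho (lp.single 2 n (1:ℂ)) _ (hQ₁inv u hu)
      have h3 : Pr (lp.single 2 n (1:ℂ)) - lp.single 2 n (1:ℂ)
          = -(lp.single 2 n (1:ℂ) - Pr (lp.single 2 n (1:ℂ))) := by abel
      rw [h3, inner_neg_left, h2, neg_zero]
    rw [map_sub, sub_eq_zero] at h1
    rw [h1, hs n]
  have hDefect : ∀ q ∈ Q₁,
      q - Pr (s (ContinuousLinearMap.adjoint s q)) = ⟪w, q⟫_ℂ • w := by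
    intro q hq
    have h1 : s (ContinuousLinearMap.adjoint s q)
        = q - (q 0 : ℂ) • (lp.single 2 (0:ℕ) (1:ℂ) : lp (fun _ : ℕ => ℂ) 2) := by
      apply lp_ext; intro b
      have hc : ∀ b : ℕ,
          ((q - (q 0 : ℂ) • (lp.single 2 (0:ℕ) (1:ℂ) : lp (fun _ : ℕ => ℂ) 2) :
            lp (fun _ : ℕ => ℂ) 2)) b = q b - q 0 * (if b = 0 then 1 else 0) := by
        intro b
        rw [lp.coeFn_sub, Pi.sub_apply, lp.coeFn_smul, Pi.smul_apply, smul_eq_mul, single_coord]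
      match b with
      | 0 => rw [hs0, hc]; simp
      | (b+1) => rw [hsSucc, hsS, hc]; simp
    rw [h1, map_sub, map_smul, hPrfix q hq, ← hw_def, hInnw q hq, sub_sub_cancel]
  refine ⟨fun hcomm => ?_, fun hE => ?_⟩
  · -- FORWARD
    have hcommP : ∀ x, PM (A x) = A (PM x) := by
      intro x
      have h := ContinuousLinearMap.ext_iff.mp hcomm x
      simpa [ContinuousLinearMap.comp_apply] using h
    have hcommP' : ∀ x, PM (A' x) = A' (PM x) := by
      intro x
      apply ext_inner_right ℂ
      intro y
      have l1 : ⟪PM (A' x), y⟫_ℂ = ⟪x, A (PM y)⟫_ℂ := by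
        rw [hPMinner, ← hAdjA, ContinuousLinearMap.adjoint_inner_left]
      have l2 : ⟪A' (PM x), y⟫_ℂ = ⟪x, A (PM y)⟫_ℂ := by
        rw [← hAdjA, ContinuousLinearMap.adjoint_inner_left, hPMinner, hcommP y]
      rw [l1, l2]
    have hAMf : ∀ x ∈ M, A x ∈ M := fun x hx =>
      hMofPM _ (by rw [hcommP x, hMfix x hx])
    have hA'Mf : ∀ x ∈ M, A' x ∈ M := fun x hx =>
      hMofPM _ (by rw [hcommP' x, hMfix x hx])
    have hA'powM : ∀ (k : ℕ), ∀ f ∈ M, (A' ^ k) f ∈ M := by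
      intro k
      induction k with
      | zero => intro f hf; simpa using hf
      | succ k ih =>
        intro f hf
        rw [pow_succ, ContinuousLinearMap.mul_apply]
        exact ih _ (hA'Mf f hf)
    have hA'pow : ∀ (k : ℕ), ∀ f ∈ Q, ((A' ^ k) f ∈ Q ∧
        ∀ g, slice g ((A' ^ k) f) = ((ContinuousLinearMap.adjoint s) ^ k) (slice g f)) := by
      intro k
      induction k with
      | zero => intro f hf; refine ⟨by simpa using hf, fun g => by simp⟩
      | succ k ih =>
        intro f hf
        have h1 : (A' ^ (k+1)) f = (A' ^ k) (A' f) := by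
          rw [pow_succ, ContinuousLinearMap.mul_apply]
        obtain ⟨ihQ, ihs⟩ := ih (A' f) (hA'memQ f)
        refine ⟨by rw [h1]; exact ihQ, fun g => ?_⟩
        rw [h1, ihs g, hA'slice f hf g, hPrfix _ (hQ₁inv _ ((hQs f).mp hf g))]
        rw [pow_succ, ContinuousLinearMap.mul_apply]
    have hsStarPow : ∀ (k : ℕ) (x : lp (fun _ : ℕ => ℂ) 2) (b : ℕ),
        (((ContinuousLinearMap.adjoint s) ^ k) x) b = x (b + k) := by
      intro k
      induction k with
      | zero => intro x b; simp
      | succ k ih =>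
        intro x b
        rw [pow_succ, ContinuousLinearMap.mul_apply, ih, hsS, Nat.add_assoc]
    refine ⟨Submodule.comap (tpR w).toLinearMap M, ?_, ?_⟩
    · have hset : ((Submodule.comap (tpR w).toLinearMap M :
          Submodule ℂ (lp (fun _ : Fin m → ℕ => ℂ) 2)) :
          Set (lp (fun _ : Fin m → ℕ => ℂ) 2)) = ⇑(tpR w) ⁻¹' (M :
          Set (lp (fun _ : ℕ × (Fin m → ℕ) => ℂ) 2)) := rfl
      rw [hset]
      exact hMclosed.preimage (tpR w).continuous
    · ext f
      simp only [SetLike.mem_coe, Set.mem_setOf_eq]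
      constructor
      · intro hf
        refine ⟨fun g => ⟨slice g f, (hQs f).mp (hMQ hf) g, fun a => by rw [slice_apply]⟩,
          fun k => ?_⟩
        have hyM : (A' ^ k) f ∈ M := hA'powM k f hf
        have hyQ : (A' ^ k) f ∈ Q := hMQ hyM
        have hBfM : PQ ((A' ^ k) f) - A (A' ((A' ^ k) f)) ∈ M := by
          rw [hQfix _ hyQ]
          exact M.sub_mem hyM (hAMf _ (hA'Mf _ hyM))
        have hBfval : PQ ((A' ^ k) f) - A (A' ((A' ^ k) f)) = tp w (row k f) := by
          apply lp_ext; rintro ⟨a, g⟩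
          have hyq : slice g ((A' ^ k) f) ∈ Q₁ := (hQs _).mp hyQ g
          have hcoord : (PQ ((A' ^ k) f) - A (A' ((A' ^ k) f))) (a, g)
              = slice g (PQ ((A' ^ k) f) - A (A' ((A' ^ k) f))) a := (slice_apply g _ a).symm
          rw [hcoord, map_sub, hPQslice, hPrfix _ hyq, hAslice _ (hA'memQ _),
            hA'slice _ hyQ, hPrfix _ (hQ₁inv _ hyq), hDefect _ hyq]
          rw [lp.coeFn_smul, Pi.smul_apply, smul_eq_mul, hInnw _ hyq,
            (hA'pow k f (hMQ hf)).2 g, hsStarPow, slice_apply, tp_apply, row_apply]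
          rw [zero_add]
          ring
        exact ⟨row k f, Submodule.mem_comap.mpr (by
            show tp w (row k f) ∈ M
            rw [← hBfval]; exact hBfM),
          fun g => by rw [row_apply]⟩
      · rintro ⟨h1, h2⟩
        have hfsl : ∀ g, slice g f ∈ Q₁ := by
          intro g
          obtain ⟨q, hq, hco⟩ := h1 g
          have he : slice g f = q := lp_ext fun a => by rw [slice_apply]; exact (hco a).symm
          rwa [he]
        have hfrow : ∀ a, tp w (row a f) ∈ M := by
          intro a
          obtain ⟨e, he, hco⟩ := h2 a
          have heq : row a f = e := lp_ext fun g => by rw [row_apply]; exact (hco g).symm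
          rw [heq]
          exact Submodule.mem_comap.mp he
        have hfQ : f ∈ Q := (hQs f).mpr hfsl
        have hAtp : ∀ (e : lp (fun _ : Fin m → ℕ => ℂ) 2), ∀ q ∈ Q₁,
            A (tp q e) = tp (Pr (s q)) e := by
          intro e q hq
          have htpQ : tp q e ∈ Q := by
            rw [hQs]; intro h; rw [slice_tp]; exact Q₁.smul_mem _ hq
          have hS₁tp : S₁ (tp q e) = tp (s q) e := by
            apply lp_ext; rintro ⟨a, h⟩
            match a with
            | 0 => rw [hS₁0, tp_apply, hs0, zero_mul]
            | (a+1) => rw [hS₁Succ, tp_apply, tp_apply, hsSucc]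
          rw [hAapp _ htpQ, hS₁tp, hPQtp]
        have hstep : ∀ (j : ℕ) (e : lp (fun _ : Fin m → ℕ => ℂ) 2), tp w e ∈ M →
            tp (Pr (lp.single 2 j (1:ℂ))) e ∈ M := by
          intro j
          induction j with
          | zero => intro e he; rw [← hw_def]; exact he
          | succ j ih =>
            intro e he
            have h1 := hAMf _ (ih e he)
            rw [hAtp e _ (hPrmem _), hPrSucc j] at h1
            exact h1
        have hsum : HasSum (fun a => PQ (Jrow a (row a f))) f := by
          have h := PQ.hasSum (rowSum f)
          rwa [hQfix f hfQ] at h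
        have hterm : ∀ a, PQ (Jrow a (row a f)) ∈ M := by
          intro a
          rw [Jrow_apply, hPQtp]
          exact hstep a (row a f) (hfrow a)
        exact hMclosed.mem_of_tendsto hsum
          (Filter.Eventually.of_forall (fun t => M.sum_mem (fun a _ => hterm a)))
  · -- BACKWARD
    obtain ⟨E, hEclosed, hMset⟩ := hE
    haveI : CompleteSpace (↥E) := hEclosed.completeSpace_coe
    have hmemM : ∀ f, f ∈ M ↔ ((∀ g, slice g f ∈ Q₁) ∧ (∀ a, row a f ∈ E)) := by
      intro f
      rw [← SetLike.mem_coe, hMset]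
      simp only [Set.mem_setOf_eq]
      constructor
      · rintro ⟨h1, h2⟩
        constructor
        · intro g
          obtain ⟨q, hq, hco⟩ := h1 g
          have he : slice g f = q := lp_ext fun a => by rw [slice_apply]; exact (hco a).symm
          rwa [he]
        · intro a
          obtain ⟨e, he, hco⟩ := h2 a
          have heq : row a f = e := lp_ext fun g => by rw [row_apply]; exact (hco g).symm
          rwa [heq]
      · rintro ⟨h1, h2⟩
        exact ⟨fun g => ⟨slice g f, h1 g, fun a => by rw [slice_apply]⟩,
          fun a => ⟨row a f, h2 a, fun g => by rw [row_apply]⟩⟩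
    have hEdual : ∀ z : lp (fun _ : Fin m → ℕ => ℂ) 2,
        (∀ y ∈ Eᗮ, ⟪y, z⟫_ℂ = 0) → z ∈ E := by
      intro z h
      have h2 : z ∈ Eᗮᗮ := by
        rw [Submodule.mem_orthogonal]
        intro u hu
        exact h u hu
      rwa [Submodule.orthogonal_orthogonal] at h2
    have hrowPQ : ∀ h : lp (fun _ : ℕ × (Fin m → ℕ) => ℂ) 2,
        (∀ b, row b h ∈ E) → ∀ a, row a (PQ h) ∈ E := by
      intro h hb a
      apply hEdual
      intro y hy
      have h1 : ⟪y, row a (PQ h)⟫_ℂ = ⟪Jrow a y, PQ h⟫_ℂ := (inner_Jrow a y (PQ h)).symm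
      rw [h1, ← hPQinner, Jrow_apply, hPQtp]
      apply inner_tp_eq_zero
      intro b
      rw [inner_eq_zero_symm]
      exact (Submodule.mem_orthogonal E y).mp hy (row b h) (hb b)
    have hAM : ∀ f ∈ M, A f ∈ M := by
      intro f hf
      obtain ⟨hsl, hrw⟩ := (hmemM f).mp hf
      have hfQ : f ∈ Q := (hQs f).mpr hsl
      rw [hmemM]
      constructor
      · intro g
        rw [hAslice f hfQ g]
        exact hPrmem _
      · rw [hAapp f hfQ]
        apply hrowPQ
        intro b
        match b with
        | 0 => rw [hrowS₁0]; exact zero_mem E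
        | (b+1) => rw [hrowS₁S]; exact hrw b
    have hA'M : ∀ f ∈ M, A' f ∈ M := by
      intro f hf
      obtain ⟨hsl, hrw⟩ := (hmemM f).mp hf
      have hfQ : f ∈ Q := (hQs f).mpr hsl
      rw [hmemM]
      constructor
      · intro g
        rw [hA'slice f hfQ g]
        exact hPrmem _
      · rw [hA'app f hfQ]
        apply hrowPQ
        intro b
        rw [hrowS₁star]
        exact hrw (b+1)
    apply ContinuousLinearMap.ext
    intro x
    simp only [ContinuousLinearMap.comp_apply]
    apply ext_inner_right ℂ
    intro y
    have e1 : ⟪PM (A x), y⟫_ℂ = ⟪x, A' (PM y)⟫_ℂ := by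
      have h := ContinuousLinearMap.adjoint_inner_right A x (PM y)
      rw [hAdjA] at h
      exact (hPMinner (A x) y).trans h.symm
    have e2 : ⟪PM x, A' (PM y)⟫_ℂ = ⟪x, A' (PM y)⟫_ℂ := by
      rw [hPMinner x (A' (PM y)), hMfix _ (hA'M _ (hMmem y))]
    have e3 : ⟪PM x, A' (PM y)⟫_ℂ = ⟪A (PM x), PM y⟫_ℂ := by
      have h := ContinuousLinearMap.adjoint_inner_right A (PM x) (PM y)
      rw [hAdjA] at h
      exact h
    have e4 : ⟪A (PM x), PM y⟫_ℂ = ⟪A (PM x), y⟫_ℂ := by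
      conv_rhs => rw [← hMfix _ (hAM _ (hMmem x))]
      exact (hPMinner _ y).symm
    exact ((e1.trans e2.symm).trans e3).trans e4
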